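/- arXiv:1712.01583 — 5 statements merged into one kernel-verified Lean document; each statement's English description precedes it below -/
import Mathlib

section
/- Let Γ be a finite simple graph, 𝒢 and ℋ sets of proper special subgroups of A_Γ with P(ℋ) ⊆ 𝒢 (every special subgroup contained in a member of ℋ lies in 𝒢). Define v ≤_𝒢 w iff v ≤ w in the standard order and every Δ with A_Δ ∈ 𝒢 containing v also contains w. Then for distinct vertices v, w with v ≤_Γ w, the transvection ρ^w_v preserves every member of 𝒢 (up to conjugacy) and acts trivially on every member of ℋ if and only if v ≤_𝒢 w. -/
/-! Basic definitions: right-angled Artin groups, special subgroups,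
relative automorphism notions, and graph-theoretic notions from
Day–Wade, "Relative automorphism groups of right-angled Artin groups". -/

namespace RAAGPaper

variable {V : Type}

open scoped commutatorElement in
/-- The commutator relations defining the RAAG on a simple graph. -/
def raagRels (G : SimpleGraph V) : Set (FreeGroup V) :=
  {r | ∃ v w : V, G.Adj v w ∧ r = ⁅FreeGroup.of v, FreeGroup.of w⁆}

/-- The right-angled Artin group on the graph `G`. -/
abbrev RAAG (G : SimpleGraph V) : Type := PresentedGroup (raagRels G)

/-- The generator of `RAAG G` corresponding to a vertex. -/
def gen (G : SimpleGraph V) (v : V) : RAAG G := PresentedGroup.of v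

/-- The special subgroup `A_Δ` generated by the vertices of a (full) subgraph `Δ`. -/
def sp (G : SimpleGraph V) (Δ : Set V) : Subgroup (RAAG G) :=
  Subgroup.closure (gen G '' Δ)

/-- The link of a vertex. -/
def lk (G : SimpleGraph V) (v : V) : Set V := {w | G.Adj v w}

/-- The star of a vertex. -/
def st (G : SimpleGraph V) (v : V) : Set V := insert v (lk G v)

/-- The standard (domination) order: `u ≤ v` iff `lk(u) ⊆ st(v)`. -/
def stdLE (G : SimpleGraph V) (u v : V) : Prop := lk G u ⊆ st G v

/-- An automorphism acts trivially on a subgroup if it agrees with an inner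
automorphism on that subgroup. -/
def ActsTrivially {A : Type*} [Group A] (φ : MulAut A) (H : Subgroup A) : Prop :=
  ∃ g : A, ∀ h ∈ H, φ h = g * h * g⁻¹

/-- An automorphism preserves a subgroup if it sends it to a conjugate of itself. -/
def Preserves {A : Type*} [Group A] (φ : MulAut A) (H : Subgroup A) : Prop :=
  ∃ g : A, Subgroup.map φ.toMonoidHom H = Subgroup.map (MulAut.conj g).toMonoidHom H

/-- `𝒢`-adjacency: adjacent in `G` or contained in a common member of `𝒢`. -/
def gAdj (G : SimpleGraph V) (calG : Set (Set V)) (u w : V) : Prop :=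
  G.Adj u w ∨ ∃ Δ ∈ calG, u ∈ Δ ∧ w ∈ Δ

/-- `𝒢`-reachability within a set `S` of vertices. -/
def gReach (G : SimpleGraph V) (calG : Set (Set V)) (S : Set V) : V → V → Prop :=
  Relation.ReflTransGen (fun a b => a ∈ S ∧ b ∈ S ∧ gAdj G calG a b)

/-- `K` is a union of `𝒢`-components of (the full subgraph on) `S`.
With `calG = ∅` this says `K` is a union of connected components of `S`. -/
def UnionOfComps (G : SimpleGraph V) (calG : Set (Set V)) (S K : Set V) : Prop :=
  K ⊆ S ∧ ∀ u ∈ K, ∀ w, gReach G calG S u w → w ∈ K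

/-- The members of `𝒢` not containing the vertex `x`. -/
def calGx (calG : Set (Set V)) (x : V) : Set (Set V) := {Δ ∈ calG | x ∉ Δ}

/-- The `𝒢`-order: `u ≤_𝒢 v` iff `u ≤ v` in the standard order and every member of
`𝒢` containing `u` also contains `v`. -/
def gLE (G : SimpleGraph V) (calG : Set (Set V)) (u v : V) : Prop :=
  stdLE G u v ∧ ∀ Δ ∈ calG, u ∈ Δ → v ∈ Δ

/-- `Δ` meets at most one `𝒢^x`-component of `Γ - st(x)`. -/
def MeetsAtMostOne (G : SimpleGraph V) (calG : Set (Set V)) (x : V) (Δ : Set V) : Prop :=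
  ∀ u w, u ∈ Δ → w ∈ Δ → u ∈ (st G x)ᶜ → w ∈ (st G x)ᶜ →
    gReach G (calGx calG x) ((st G x)ᶜ) u w

/-- `Δ` is upwards closed under the `𝒢`-order. -/
def UpClosed (G : SimpleGraph V) (calG : Set (Set V)) (Δ : Set V) : Prop :=
  ∀ v ∈ Δ, ∀ w, gLE G calG v w → w ∈ Δ

/-- `Δ` is not `𝒢`-star-separated by any outside vertex. -/
def NotStarSep (G : SimpleGraph V) (calG : Set (Set V)) (Δ : Set V) : Prop :=
  ∀ x, x ∉ Δ → MeetsAtMostOne G calG x Δ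

/-- All members of `calG` are proper (special) subgroups. -/
def Proper (calG : Set (Set V)) : Prop := ∀ Δ ∈ calG, Δ ≠ Set.univ

/-- Word length of an element of the RAAG with respect to the standard generators. -/
noncomputable def wordLength (G : SimpleGraph V) (g : RAAG G) : ℕ :=
  sInf {n | ∃ l : List (V × Bool), PresentedGroup.mk (raagRels G) (FreeGroup.mk l) = g ∧
    l.length = n}

/-- An element is cyclically reduced if it has minimal word length in its
conjugacy class. -/
noncomputable def CycRed (G : SimpleGraph V) (g : RAAG G) : Prop :=
  ∀ h : RAAG G, wordLength G g ≤ wordLength G (h * g * h⁻¹)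

/-- The link of `v` computed inside the full subgraph `Δ`. -/
def lkIn (G : SimpleGraph V) (Δ : Set V) (v : V) : Set V := {w ∈ Δ | G.Adj v w}

/-- The star of `v` computed inside the full subgraph `Δ`. -/
def stIn (G : SimpleGraph V) (Δ : Set V) (v : V) : Set V := insert v (lkIn G Δ v)

/-- Domination computed inside the full subgraph `Δ`. -/
def leIn (G : SimpleGraph V) (Δ : Set V) (u v : V) : Prop :=
  lkIn G Δ u ⊆ stIn G Δ v

/-- The induced peripheral structure `𝒢_Δ`: proper intersections of members of `𝒢`
with `Δ`. -/
def inducedG (calG : Set (Set V)) (Δ : Set V) : Set (Set V) :=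
  {Θ | ∃ Λ ∈ calG, Θ = Δ ∩ Λ ∧ Δ ∩ Λ ≠ Δ}

/-- `𝒢` is saturated: it contains every proper special subgroup invariant under
`Out⁰(A_Γ; 𝒢)`, where invariance is characterized by being upwards closed under
`≤_𝒢` and not `𝒢`-star-separated by an outside vertex. -/
def Saturated (G : SimpleGraph V) (calG : Set (Set V)) : Prop :=
  ∀ Δ : Set V, Δ ≠ Set.univ → UpClosed G calG Δ → NotStarSep G calG Δ → Δ ∈ calG

/-- `φ` is an inversion automorphism. -/
def IsInversion (G : SimpleGraph V) (φ : MulAut (RAAG G)) : Prop :=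
  ∃ v, φ (gen G v) = (gen G v)⁻¹ ∧ ∀ w, w ≠ v → φ (gen G w) = gen G w

/-- `φ` is a transvection. -/
def IsTransvection (G : SimpleGraph V) (φ : MulAut (RAAG G)) : Prop :=
  ∃ v w, v ≠ w ∧ stdLE G v w ∧ φ (gen G v) = gen G v * gen G w ∧
    ∀ u, u ≠ v → φ (gen G u) = gen G u

/-- `φ` is an extended partial conjugation. -/
def IsEPC (G : SimpleGraph V) (φ : MulAut (RAAG G)) : Prop :=
  ∃ x K, UnionOfComps G ∅ ((st G x)ᶜ) K ∧
    (∀ w ∈ K, φ (gen G w) = gen G x * gen G w * (gen G x)⁻¹) ∧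
    ∀ w ∉ K, φ (gen G w) = gen G w

/-- The subgroup `Aut⁰(A_Γ)` generated by inversions, transvections and extended
partial conjugations. -/
def Aut0 (G : SimpleGraph V) : Subgroup (MulAut (RAAG G)) :=
  Subgroup.closure {φ | IsInversion G φ ∨ IsTransvection G φ ∨ IsEPC G φ}



open Classical in
/-- The exponent-sum homomorphism counting occurrences of the generator `w`. -/
noncomputable def chi (G : SimpleGraph V) (w : V) : RAAG G →* Multiplicative ℤ :=
  PresentedGroup.toGroup (f := fun u => if u = w then Multiplicative.ofAdd 1 else 1)
    (by
      rintro r ⟨a, b, _, rfl⟩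
      rw [map_commutatorElement]
      exact commutatorElement_eq_one_iff_commute.mpr (Commute.all _ _))

open Classical in
theorem chi_gen (G : SimpleGraph V) (w u : V) :
    chi G w (gen G u) = if u = w then Multiplicative.ofAdd 1 else 1 :=
  PresentedGroup.toGroup.of _

theorem chi_of_mem (G : SimpleGraph V) {w : V} {Δ : Set V} (hw : w ∉ Δ)
    {h : RAAG G} (hh : h ∈ sp G Δ) : chi G w h = 1 := by
  induction hh using Subgroup.closure_induction with
  | mem x hx =>
    obtain ⟨u, hu, rfl⟩ := hx
    rw [chi_gen, if_neg]
    rintro rfl; exact hw hu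
  | one => simp
  | mul x y _ _ hx hy => rw [map_mul, hx, hy, one_mul]
  | inv x _ hx => rw [map_inv, hx, inv_one]

/-- Assuming `P(ℋ) ⊆ 𝒢`, a transvection `ρ^w_v` preserves each
member of `𝒢` and acts trivially on each member of `ℋ` iff `v ≤_𝒢 w`. -/
theorem transvection_in_relative_group_iff [Fintype V] (G : SimpleGraph V)
    (calG calH : Set (Set V)) (hpropG : Proper calG) (hpropH : Proper calH)
    (hPH : ∀ Δ : Set V, (∃ Λ ∈ calH, Δ ⊆ Λ) → Δ ∈ calG)
    (v w : V) (hvw : v ≠ w) (hle : stdLE G v w)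
    (ρ : MulAut (RAAG G))
    (h1 : ρ (gen G v) = gen G v * gen G w)
    (h2 : ∀ u, u ≠ v → ρ (gen G u) = gen G u) :
    ((∀ Δ ∈ calG, Preserves ρ (sp G Δ)) ∧
      (∀ Λ ∈ calH, ActsTrivially ρ (sp G Λ))) ↔ gLE G calG v w := by
  constructor
  · rintro ⟨hG, -⟩
    refine ⟨hle, fun Δ hΔ hv => ?_⟩
    by_contra hw
    obtain ⟨g, hg⟩ := hG Δ hΔ
    have hv' : gen G v ∈ sp G Δ := Subgroup.subset_closure ⟨v, hv, rfl⟩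
    have hmem : ρ (gen G v) ∈ Subgroup.map (MulAut.conj g).toMonoidHom (sp G Δ) := by
      rw [← hg]; exact ⟨gen G v, hv', rfl⟩
    obtain ⟨h, hh, hgh⟩ := hmem
    have h3 : chi G w (g * h * g⁻¹) = chi G w h := by
      rw [map_mul, map_mul, map_inv]
      exact mul_inv_cancel_comm _ _
    have h4 : chi G w (ρ (gen G v)) = 1 := by
      rw [← hgh]
      simpa [chi_of_mem G hw hh] using h3
    rw [h1, map_mul, chi_gen, chi_gen, if_neg hvw, if_pos rfl, one_mul] at h4
    simp at h4
  · rintro ⟨-, hOrd⟩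
    constructor
    · intro Δ hΔ
      refine ⟨1, ?_⟩
      have hid : Subgroup.map (MulAut.conj (1 : RAAG G)).toMonoidHom (sp G Δ) = sp G Δ := by
        have h0 : (MulAut.conj (1 : RAAG G)).toMonoidHom = MonoidHom.id _ := by
          ext x; simp
        rw [h0, Subgroup.map_id]
      rw [hid]
      by_cases hv : v ∈ Δ
      · have hw : w ∈ Δ := hOrd Δ hΔ hv
        apply le_antisymm
        · rw [sp, MonoidHom.map_closure]
          apply Subgroup.closure_le _ |>.mpr
          rintro x ⟨y, ⟨u, hu, rfl⟩, rfl⟩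
          by_cases huv : u = v
          · subst huv
            show ρ (gen G u) ∈ sp G Δ
            rw [h1]
            exact mul_mem (Subgroup.subset_closure ⟨u, hu, rfl⟩)
              (Subgroup.subset_closure ⟨w, hw, rfl⟩)
          · show ρ (gen G u) ∈ sp G Δ
            rw [h2 u huv]
            exact Subgroup.subset_closure ⟨u, hu, rfl⟩
        · apply Subgroup.closure_le _ |>.mpr
          rintro x ⟨u, hu, rfl⟩
          by_cases huv : u = v
          · subst huv
            have hwv : gen G w ∈ Subgroup.map ρ.toMonoidHom (sp G Δ) := by
              refine ⟨gen G w, Subgroup.subset_closure ⟨w, hw, rfl⟩, ?_⟩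
              exact h2 w (Ne.symm hvw)
            have hvw' : gen G u * gen G w ∈ Subgroup.map ρ.toMonoidHom (sp G Δ) := by
              refine ⟨gen G u, Subgroup.subset_closure ⟨u, hu, rfl⟩, h1⟩
            have := mul_mem hvw' (inv_mem hwv)
            simpa using this
          · refine ⟨gen G u, Subgroup.subset_closure ⟨u, hu, rfl⟩, h2 u huv⟩
      · apply le_antisymm
        · rw [sp, MonoidHom.map_closure]
          apply Subgroup.closure_le _ |>.mpr
          rintro x ⟨y, ⟨u, hu, rfl⟩, rfl⟩
          show ρ (gen G u) ∈ sp G Δ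
          rw [h2 u (fun h => hv (h ▸ hu))]
          exact Subgroup.subset_closure ⟨u, hu, rfl⟩
        · apply Subgroup.closure_le _ |>.mpr
          rintro x ⟨u, hu, rfl⟩
          exact ⟨gen G u, Subgroup.subset_closure ⟨u, hu, rfl⟩,
            h2 u (fun h => hv (h ▸ hu))⟩
    · intro Λ hΛ
      have hvΛ : v ∉ Λ := by
        intro hv
        have : ({v} : Set V) ∈ calG := hPH {v} ⟨Λ, hΛ, by simpa using hv⟩
        have := hOrd {v} this rfl
        exact hvw (this.symm)
      refine ⟨1, fun h hh => ?_⟩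
      rw [inv_one, one_mul, mul_one]
      induction hh using Subgroup.closure_induction with
      | mem x hx =>
        obtain ⟨u, hu, rfl⟩ := hx
        exact h2 u (fun h => hvΛ (h ▸ hu))
      | one => simp
      | mul x y _ _ hx hy => rw [map_mul, hx, hy]
      | inv x _ hx => rw [map_inv, hx]


end RAAGPaper
end

section
/- Let Γ be a finite simple graph and 𝒢 a set of proper special subgroups. Suppose Δ₁ and Δ₂ are full subgraphs each satisfying: (a) for all vertices v ∈ Δᵢ and all w with v ≤_𝒢 w, also w ∈ Δᵢ; and (b) for every vertex x ∉ Δᵢ, Δᵢ intersects at most one 𝒢^x-component of Γ − st(x). Then the intersection Δ₁ ∩ Δ₂ also satisfies (a) and (b). -/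
/-! Basic definitions: right-angled Artin groups, special subgroups,
relative automorphism notions, and graph-theoretic notions from
Day–Wade, "Relative automorphism groups of right-angled Artin groups". -/

namespace RAAGPaper

variable {V : Type}

/-- The invariance conditions (upwards closure under `≤_𝒢` and
not being `𝒢`-star-separated by an outside vertex) are preserved by
intersections. -/
theorem invariance_conditions_inter [Fintype V] (G : SimpleGraph V)
    (calG : Set (Set V)) (hprop : Proper calG) (Δ₁ Δ₂ : Set V)
    (h1 : UpClosed G calG Δ₁ ∧ NotStarSep G calG Δ₁)
    (h2 : UpClosed G calG Δ₂ ∧ NotStarSep G calG Δ₂) :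
    UpClosed G calG (Δ₁ ∩ Δ₂) ∧ NotStarSep G calG (Δ₁ ∩ Δ₂) := by
  constructor
  · intro v hv w hle
    exact ⟨h1.1 v hv.1 w hle, h2.1 v hv.2 w hle⟩
  · intro x hx u w hu hw hu' hw'
    rcases not_and_or.mp (by simpa [Set.mem_inter_iff] using hx) with hx1 | hx2
    · exact h1.2 x hx1 u w hu.1 hw.1 hu' hw'
    · exact h2.2 x hx2 u w hu.2 hw.2 hu' hw'

end RAAGPaper
end

section
/- Let Γ be a finite simple graph and 𝒢 a set of proper special subgroups. If Δ is a 𝒢-component of Γ containing at least two vertices, then Δ is upwards closed under ≤_𝒢 (v ∈ Δ and v ≤_𝒢 w implies w ∈ Δ) and for every vertex x ∉ Δ, Δ intersects at most one 𝒢^x-component of Γ − st(x). -/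
/-! Basic definitions: right-angled Artin groups, special subgroups,
relative automorphism notions, and graph-theoretic notions from
Day–Wade, "Relative automorphism groups of right-angled Artin groups". -/

namespace RAAGPaper

variable {V : Type}

/-- A `𝒢`-component of `Γ` with at least two vertices is upwards
closed under `≤_𝒢` and not `𝒢`-star-separated by any outside vertex. -/
theorem g_component_invariant [Fintype V] (G : SimpleGraph V)
    (calG : Set (Set V)) (hprop : Proper calG) (Δ : Set V)
    (hcomp : UnionOfComps G calG Set.univ Δ)
    (hconn : ∀ u ∈ Δ, ∀ w ∈ Δ, gReach G calG Set.univ u w)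
    (htwo : ∃ a ∈ Δ, ∃ b ∈ Δ, a ≠ b) :
    UpClosed G calG Δ ∧ NotStarSep G calG Δ := by
  -- helper: any vertex 𝒢-adjacent to a vertex of Δ is in Δ
  have hstep : ∀ a ∈ Δ, ∀ b, gAdj G calG a b → b ∈ Δ := by
    intro a ha b hab
    exact hcomp.2 a ha b (Relation.ReflTransGen.single ⟨trivial, trivial, hab⟩)
  constructor
  · -- UpClosed
    intro v hv w hle
    by_cases hvw : w = v
    · exact hvw ▸ hv
    -- find some vertex ≠ v in Δ and a first step of a path from v to it
    obtain ⟨a, ha, b, hb, hab⟩ := htwo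
    have hex : ∃ t ∈ Δ, t ≠ v := by
      by_cases hav : a = v
      · exact ⟨b, hb, fun h => hab (hav.trans h.symm)⟩
      · exact ⟨a, ha, hav⟩
    obtain ⟨t, ht, htv⟩ := hex
    have hpath := hconn v hv t ht
    rcases (Relation.ReflTransGen.cases_head hpath) with heq | ⟨u, ⟨-, -, hadj⟩, -⟩
    · exact absurd heq.symm htv
    · have hu : u ∈ Δ := hstep v hv u hadj
      rcases hadj with hGadj | ⟨Λ, hΛ, hvΛ, huΛ⟩
      · -- u ∈ lk v ⊆ st w
        have : u ∈ st G w := hle.1 hGadj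
        rcases this with h | h
        · exact h ▸ hu
        · exact hstep u hu w (Or.inl h.symm)
      · have hwΛ : w ∈ Λ := hle.2 Λ hΛ hvΛ
        exact hstep u hu w (Or.inr ⟨Λ, hΛ, huΛ, hwΛ⟩)
  · -- NotStarSep
    intro x hx u w hu hw hust hwst
    clear hust hwst
    -- Δ avoids st x
    have hΔst : ∀ a ∈ Δ, a ∈ (st G x)ᶜ := by
      intro a ha hmem
      rcases hmem with h | h
      · exact hx (h ▸ ha)
      · exact hx (hstep a ha x (Or.inl (G.adj_symm h)))
    -- any Λ ∈ calG meeting Δ avoids x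
    have hΛx : ∀ Λ ∈ calG, ∀ a ∈ Δ, a ∈ Λ → x ∉ Λ := by
      intro Λ hΛ a ha haΛ hxΛ
      exact hx (hstep a ha x (Or.inr ⟨Λ, hΛ, haΛ, hxΛ⟩))
    -- transfer the path
    have hpath := hconn u hu w hw
    clear hw
    induction hpath with
    | refl => exact Relation.ReflTransGen.refl
    | tail hbc hcd ih =>
      rename_i p q
      have hp : p ∈ Δ := hcomp.2 u hu p hbc
      have hq : q ∈ Δ := hstep p hp q hcd.2.2
      refine ih.tail ⟨hΔst p hp, hΔst q hq, ?_⟩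
      rcases hcd.2.2 with hGadj | ⟨Λ, hΛ, hpΛ, hqΛ⟩
      · exact Or.inl hGadj
      · exact Or.inr ⟨Λ, ⟨hΛ, hΛx Λ hΛ p hp hpΛ⟩, hpΛ, hqΛ⟩

end RAAGPaper
end

section
/- Let Γ be a finite simple graph whose vertices are totally ordered compatibly with the standard order (v_i ≤_Γ v_j implies i ≤ j), with equivalent vertices consecutive. Then the image of Aut⁰(A_Γ) under the homomorphism to GL(n,ℤ) induced by the action on the abelianization consists of block lower-triangular matrices with respect to the blocks given by the equivalence classes of vertices. -/
/-! Basic definitions: right-angled Artin groups, special subgroups,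
relative automorphism notions, and graph-theoretic notions from
Day–Wade, "Relative automorphism groups of right-angled Artin groups". -/

namespace RAAGPaper

variable {V : Type}

section Proof17

lemma stdLE_refl (G : SimpleGraph V) (u : V) : stdLE G u u :=
  fun _ hx => Set.mem_insert_of_mem _ hx

lemma stdLE_trans (G : SimpleGraph V) {u v w : V} (h1 : stdLE G u v) (h2 : stdLE G v w) :
    stdLE G u w := by
  intro x hx
  rcases h1 hx with rfl | hvx
  · have hu : u ∈ st G w := h2 (SimpleGraph.Adj.symm hx)
    rcases hu with rfl | hwu
    · exact Set.mem_insert_of_mem _ hx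
    · have hww : w ∈ st G x := h1 (SimpleGraph.Adj.symm hwu)
      rcases hww with rfl | h
      · exact Set.mem_insert _ _
      · exact Set.mem_insert_of_mem _ (SimpleGraph.Adj.symm h)
  · exact h2 hvx

variable [Fintype V] [DecidableEq V] (G : SimpleGraph V)
  (ab : RAAG G →* Multiplicative (V → ℤ))

/-- Matrix of an automorphism acting on the abelianization. -/
def mat (ψ : MulAut (RAAG G)) : Matrix V V ℤ :=
  Matrix.of fun u v => Multiplicative.toAdd (ab (ψ (gen G v))) u

/-- Lower-triangularity of a matrix with respect to the standard order. -/
def Tri (M : Matrix V V ℤ) : Prop := ∀ u v : V, ¬ stdLE G v u → M u v = 0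

variable (hab : ∀ u : V, ab (gen G u) = Multiplicative.ofAdd (Pi.single u 1))

include hab

lemma mat_eval (ψ : MulAut (RAAG G)) (u : V) (g : RAAG G) :
    Multiplicative.toAdd (ab (ψ g)) u =
      ∑ v, mat G ab ψ u v * Multiplicative.toAdd (ab g) v := by
  let L : (V → ℤ) →+ ℤ :=
    { toFun := fun f => ∑ v, mat G ab ψ u v * f v
      map_zero' := by simp
      map_add' := by intro f g; simp [mul_add, Finset.sum_add_distrib] }
  let F1 : RAAG G →* Multiplicative ℤ :=
    (AddMonoidHom.toMultiplicative (Pi.evalAddMonoidHom (fun _ => ℤ) u)).comp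
      (ab.comp ψ.toMonoidHom)
  let F2 : RAAG G →* Multiplicative ℤ :=
    (AddMonoidHom.toMultiplicative L).comp ab
  have hFF : F1 = F2 := by
    apply PresentedGroup.ext
    intro x
    show Multiplicative.ofAdd (Multiplicative.toAdd (ab (ψ (gen G x))) u) =
      Multiplicative.ofAdd (∑ v, mat G ab ψ u v * Multiplicative.toAdd (ab (gen G x)) v)
    congr 1
    simp only [hab x, toAdd_ofAdd, Pi.single_apply, mul_ite, mul_one, mul_zero]
    rw [Finset.sum_ite_eq' Finset.univ x (fun v => mat G ab ψ u v)]
    simp only [Finset.mem_univ, if_true]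
    rfl
  exact congrArg Multiplicative.toAdd (DFunLike.congr_fun hFF g)

lemma mat_one : mat G ab 1 = 1 := by
  ext u v
  show Multiplicative.toAdd (ab (gen G v)) u = (1 : Matrix V V ℤ) u v
  rw [hab v]
  simp [Pi.single_apply, Matrix.one_apply]

lemma mat_mul (ψ χ : MulAut (RAAG G)) : mat G ab (ψ * χ) = mat G ab ψ * mat G ab χ := by
  ext u v
  show Multiplicative.toAdd (ab (ψ (χ (gen G v)))) u = _
  rw [mat_eval G ab hab ψ u (χ (gen G v))]
  rfl

lemma mat_inv (ψ : MulAut (RAAG G)) (N : Matrix V V ℤ) (hN : mat G ab ψ * N = 1) :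
    mat G ab ψ⁻¹ = N := by
  have h1 : mat G ab ψ⁻¹ * mat G ab ψ = 1 := by
    rw [← mat_mul G ab hab, inv_mul_cancel, mat_one G ab hab]
  calc mat G ab ψ⁻¹ = mat G ab ψ⁻¹ * (mat G ab ψ * N) := by rw [hN, mul_one]
    _ = (mat G ab ψ⁻¹ * mat G ab ψ) * N := (mul_assoc _ _ _).symm
    _ = N := by rw [h1, one_mul]

omit hab in
lemma tri_one : Tri G (1 : Matrix V V ℤ) := by
  intro u v h
  rcases eq_or_ne u v with rfl | hne
  · exact absurd (stdLE_refl G u) h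
  · simp [Matrix.one_apply, hne]

omit hab in
lemma tri_mul {A B : Matrix V V ℤ} (hA : Tri G A) (hB : Tri G B) : Tri G (A * B) := by
  intro u v h
  rw [Matrix.mul_apply]
  refine Finset.sum_eq_zero fun w _ => ?_
  by_cases h1 : stdLE G w u
  · by_cases h2 : stdLE G v w
    · exact absurd (stdLE_trans G h2 h1) h
    · rw [hB w v h2, mul_zero]
  · rw [hA u w h1, zero_mul]

lemma tri_gen (φ : MulAut (RAAG G)) (hg : IsInversion G φ ∨ IsTransvection G φ ∨ IsEPC G φ) :
    Tri G (mat G ab φ) ∧ Tri G (mat G ab φ⁻¹) := by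
  rcases hg with ⟨v0, h1, h2⟩ | ⟨v, w, hvw, hle, h1, h2⟩ | ⟨x, K, _, h1, h2⟩
  · -- inversion
    have htri : Tri G (mat G ab φ) := by
      intro u v h
      have hne : u ≠ v := by rintro rfl; exact h (stdLE_refl G u)
      show Multiplicative.toAdd (ab (φ (gen G v))) u = 0
      by_cases hv : v = v0
      · subst hv
        rw [h1, map_inv, hab]
        simp [Pi.single_apply, hne]
      · rw [h2 v hv, hab v]
        simp [Pi.single_apply, hne]
    have hsq : φ * φ = 1 := by
      have hcomp : (φ.toMonoidHom.comp φ.toMonoidHom) = MonoidHom.id (RAAG G) := by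
        apply PresentedGroup.ext
        intro y
        show φ (φ (gen G y)) = gen G y
        by_cases hy : y = v0
        · subst hy; rw [h1, map_inv, h1, inv_inv]
        · rw [h2 y hy, h2 y hy]
      ext g
      exact DFunLike.congr_fun hcomp g
    have hinv : φ⁻¹ = φ := inv_eq_of_mul_eq_one_right hsq
    exact ⟨htri, by rw [hinv]; exact htri⟩
  · -- transvection
    set E : Matrix V V ℤ := Matrix.of fun a b => if a = w ∧ b = v then (1 : ℤ) else 0 with hE
    have hEapp : ∀ a b, E a b = if a = w ∧ b = v then (1 : ℤ) else 0 := fun a b => rfl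
    have hmat : mat G ab φ = 1 + E := by
      ext u v'
      show Multiplicative.toAdd (ab (φ (gen G v'))) u = (1 + E) u v'
      rw [Matrix.add_apply, Matrix.one_apply, hEapp]
      by_cases hv' : v' = v
      · subst hv'
        rw [h1, map_mul, hab, hab]
        simp only [toAdd_mul, toAdd_ofAdd, Pi.add_apply]
        by_cases huv : u = v'
        · subst huv
          simp [Pi.single_apply, Ne.symm hvw, hvw]
        · by_cases huw : u = w
          · subst huw
            simp [Pi.single_apply, huv, Ne.symm hvw]
          · simp [Pi.single_apply, huv, huw]
      · rw [h2 v' hv', hab v']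
        simp only [toAdd_ofAdd, Pi.single_apply, hv', and_false, if_false, add_zero]
    have hEE : E * E = 0 := by
      ext a b
      rw [Matrix.mul_apply, Matrix.zero_apply]
      refine Finset.sum_eq_zero fun t _ => ?_
      rw [hEapp, hEapp]
      by_cases htw : t = w
      · have hnc : ¬ (a = w ∧ t = v) := fun hc => hvw (hc.2.symm.trans htw)
        simp [hnc]
      · simp [htw]
    have hprod : mat G ab φ * (1 - E) = 1 := by
      rw [hmat, mul_sub, mul_one, add_mul, one_mul, hEE, add_zero, add_sub_cancel_right]
    have htri1 : Tri G (1 + E) := by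
      intro u v' h
      have hne : u ≠ v' := by rintro rfl; exact h (stdLE_refl G u)
      rw [Matrix.add_apply, Matrix.one_apply, hEapp]
      have : ¬ (u = w ∧ v' = v) := by
        rintro ⟨rfl, rfl⟩; exact h hle
      simp [hne, this]
    have htri2 : Tri G (1 - E) := by
      intro u v' h
      have hne : u ≠ v' := by rintro rfl; exact h (stdLE_refl G u)
      rw [Matrix.sub_apply, Matrix.one_apply, hEapp]
      have : ¬ (u = w ∧ v' = v) := by
        rintro ⟨rfl, rfl⟩; exact h hle
      simp [hne, this]
    refine ⟨hmat ▸ htri1, ?_⟩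
    rw [mat_inv G ab hab φ (1 - E) hprod]
    exact htri2
  · -- extended partial conjugation
    have hmat : mat G ab φ = 1 := by
      ext u v'
      have habφ : ab (φ (gen G v')) = ab (gen G v') := by
        by_cases hv : v' ∈ K
        · rw [h1 v' hv, map_mul, map_mul, map_inv]
          rw [mul_comm (ab (gen G x)) (ab (gen G v')), mul_assoc, mul_inv_cancel, mul_one]
        · rw [h2 v' hv]
      show Multiplicative.toAdd (ab (φ (gen G v'))) u = (1 : Matrix V V ℤ) u v'
      rw [habφ, hab v']
      simp [Pi.single_apply, Matrix.one_apply]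
    have hprod : mat G ab φ * 1 = 1 := by rw [hmat, mul_one]
    refine ⟨hmat ▸ tri_one G, ?_⟩
    rw [mat_inv G ab hab φ 1 hprod]
    exact tri_one G

end Proof17

/-- With the vertices ordered compatibly with the standard
order (and equivalent vertices consecutive), the action of `Aut⁰(A_Γ)` on the
abelianization is by block lower-triangular matrices: the matrix entry in row `i`
and column `j` vanishes unless `v_j ≤_Γ v_i`. -/
theorem aut0_block_lower_triangular {n : ℕ} [Fintype V] [DecidableEq V]
    (G : SimpleGraph V) (e : Fin n ≃ V)
    (hord : ∀ i j : Fin n, stdLE G (e i) (e j) → (i ≤ j ∨ stdLE G (e j) (e i)))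
    (hconsec : ∀ i j k : Fin n, i ≤ j → j ≤ k →
      stdLE G (e i) (e k) → stdLE G (e k) (e i) →
      (stdLE G (e i) (e j) ∧ stdLE G (e j) (e i)))
    (ab : RAAG G →* Multiplicative (V → ℤ))
    (hab : ∀ u : V, ab (gen G u) = Multiplicative.ofAdd (Pi.single u 1)) :
    ∀ φ ∈ Aut0 G, ∀ i j : Fin n, ¬ stdLE G (e j) (e i) →
      Multiplicative.toAdd (ab (φ (gen G (e j)))) (e i) = 0 := by
  intro φ hφ i j hij
  have hφ' : φ ∈ Subgroup.closure {ψ | IsInversion G ψ ∨ IsTransvection G ψ ∨ IsEPC G ψ} := hφ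
  have key : Tri G (mat G ab φ) ∧ Tri G (mat G ab φ⁻¹) := by
    refine Subgroup.closure_induction
      (p := fun ψ _ => Tri G (mat G ab ψ) ∧ Tri G (mat G ab ψ⁻¹))
      (fun ψ hψ => tri_gen G ab hab ψ hψ) ?_ ?_ ?_ hφ'
    · have h1 : Tri G (mat G ab (1 : MulAut (RAAG G))) := by
        rw [mat_one G ab hab]; exact tri_one G
      exact ⟨h1, by rw [inv_one]; exact h1⟩
    · intro a b _ _ ha hb
      refine ⟨?_, ?_⟩
      · rw [mat_mul G ab hab]; exact tri_mul G ha.1 hb.1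
      · rw [mul_inv_rev, mat_mul G ab hab]; exact tri_mul G hb.2 ha.2
    · intro a _ ha
      exact ⟨ha.2, by rw [inv_inv]; exact ha.1⟩
  exact key.1 (e i) (e j) hij

end RAAGPaper
end

section
/- Let Γ be a finite simple graph with nontrivial center Z = Z(Γ) (the set of vertices adjacent to all other vertices), Z ≠ Γ, and let Δ = Γ − Z. Then the quotient map A_Γ → A_Γ/⟨⟨A_Z⟩⟩ ≅ A_Δ is well defined, and every automorphism of A_Γ induces an automorphism of A_Δ; moreover the resulting projection map P_Δ : Out(A_Γ) → Out(A_Δ) is a surjective group homomorphism admitting a splitting given by extending automorphisms of A_Δ to fix each vertex of Z. -/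
/-! Basic definitions: right-angled Artin groups, special subgroups,
relative automorphism notions, and graph-theoretic notions from
Day–Wade, "Relative automorphism groups of right-angled Artin groups". -/



open Monoid Monoid.PushoutI Monoid.PushoutI.NormalWord Monoid.CoprodI Function



namespace PCenter

variable {ι : Type*} {K : Type*} [Group K] {G : ι → Type*} [∀ i, Group (G i)]
  {φ : ∀ i, K →* G i}

/-- product of a list of letters in the pushout -/
def pprod (φ : ∀ i, K →* G i) (l : List (Σ i, G i)) : PushoutI φ :=
  (l.map fun p => PushoutI.of p.1 p.2).prod

@[simp] lemma pprod_nil : pprod φ ([] : List (Σ i, G i)) = 1 := rfl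

@[simp] lemma pprod_cons (p : Σ i, G i) (l : List (Σ i, G i)) :
    pprod φ (p :: l) = PushoutI.of p.1 p.2 * pprod φ l := by
  simp [pprod]

@[simp] lemma pprod_append (l₁ l₂ : List (Σ i, G i)) :
    pprod φ (l₁ ++ l₂) = pprod φ l₁ * pprod φ l₂ := by
  simp [pprod]

lemma ofCoprodI_word_prod (w : Word G) :
    ofCoprodI (w.prod : CoprodI G) = pprod φ w.toList := by
  rw [Word.prod, pprod, map_list_prod, List.map_map]
  rfl

lemma reduced_fst_eq (hφ : ∀ i, Injective (φ i)) {w₁ w₂ : Word G}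
    (h₁ : Reduced φ w₁) (h₂ : Reduced φ w₂)
    (h : pprod φ w₁.toList = pprod φ w₂.toList) :
    w₁.toList.map Sigma.fst = w₂.toList.map Sigma.fst := by
  obtain ⟨d⟩ := transversal_nonempty φ hφ
  obtain ⟨w₁', hp₁, hm₁⟩ := h₁.exists_normalWord_prod_eq d
  obtain ⟨w₂', hp₂, hm₂⟩ := h₂.exists_normalWord_prod_eq d
  rw [ofCoprodI_word_prod] at hp₁ hp₂
  have : w₁' = w₂' := prod_injective (by rw [hp₁, hp₂, h])
  rw [← hm₁, ← hm₂, this]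

lemma eq_one_of_mem_set_of_mem_range {d : Monoid.PushoutI.NormalWord.Transversal φ} {k : ι} {g : G k}
    (hset : g ∈ d.set k) (hrange : g ∈ (φ k).range) : g = 1 := by
  have h := (d.compl k).existsUnique g
  obtain ⟨u, hu, huniq⟩ := h
  have h1 : (fun x : ((φ k).range : Set (G k)) × (d.set k) => (x.1 : G k) * x.2)
      (⟨⟨g, hrange⟩, ⟨1, d.one_mem k⟩⟩) = g := mul_one g
  have h2 : (fun x : ((φ k).range : Set (G k)) × (d.set k) => (x.1 : G k) * x.2)
      (⟨⟨1, one_mem _⟩, ⟨g, hset⟩⟩) = g := one_mul g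
  have := (huniq _ h1).trans (huniq _ h2).symm
  have := congrArg (fun z => (z.2 : G k)) this
  simpa using this.symm

theorem center_le_base_range (hφ : ∀ i, Injective (φ i)) {i j : ι} (hij : i ≠ j)
    {a : G i} (ha : a ∉ (φ i).range) {b : G j} (hb : b ∉ (φ j).range)
    {x : PushoutI φ} (hx : x ∈ Subgroup.center (PushoutI φ)) :
    x ∈ (PushoutI.base φ).range := by
  classical
  obtain ⟨d⟩ := transversal_nonempty φ hφ
  set w : NormalWord d := Monoid.PushoutI.NormalWord.equiv x with hw
  have hpx : w.prod = x := (Monoid.PushoutI.NormalWord.equiv (d := d)).symm_apply_apply x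
  have hxprod : x = base φ w.head * pprod φ w.toList := by
    rw [← hpx]
    show base φ w.head * ofCoprodI w.toWord.prod = _
    rw [ofCoprodI_word_prod]
  have hnr : ∀ p ∈ w.toList, Sigma.snd p ∉ (φ p.1).range := by
    rintro ⟨k, g⟩ hp hr
    exact w.ne_one ⟨k, g⟩ hp (eq_one_of_mem_set_of_mem_range (w.normalized k g hp) hr)
  rcases hs : w.toList with _ | ⟨⟨i₁, g₁⟩, t⟩
  · exact ⟨w.head, by rw [hxprod, hs, pprod_nil, mul_one]⟩
  exfalso
  set l' : List (Σ k, G k) := ⟨i₁, φ i₁ w.head * g₁⟩ :: t with hl'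
  have hl'nr : ∀ p ∈ l', Sigma.snd p ∉ (φ p.1).range := by
    rintro ⟨k, g⟩ hp hr
    rcases List.mem_cons.mp hp with heq | hp
    · cases heq
      exact hnr ⟨i₁, g₁⟩ (hs ▸ List.mem_cons_self)
        ((mul_mem_cancel_left (MonoidHom.mem_range.mpr ⟨w.head, rfl⟩)).mp hr)
    · exact hnr ⟨k, g⟩ (hs ▸ List.mem_cons_of_mem _ hp) hr
  have hl'ne1 : ∀ p ∈ l', Sigma.snd p ≠ 1 := fun p hp h1 => hl'nr p hp (h1 ▸ one_mem _)
  have hchain : l'.Chain' (fun p q => p.1 ≠ q.1) := by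
    have h0 := w.toWord.chain_ne
    rw [show w.toWord.toList = w.toList from rfl, hs] at h0
    rcases List.isChain_cons.mp h0 with ⟨h1, h2⟩
    exact List.isChain_cons.mpr ⟨h1, h2⟩
  set L' : Word G := ⟨l', hl'ne1, hchain⟩ with hL'
  have hL'red : Reduced φ L' := fun p hp => hl'nr p hp
  have hL'prod : pprod φ l' = x := by
    rw [hxprod, hs, hl']
    simp only [pprod_cons, map_mul, ← mul_assoc]
    rw [of_apply_eq_base φ i₁ w.head]
  have hcomm : ∀ y, y * x = x * y := fun y => Subgroup.mem_center_iff.mp hx y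
  have main : ∀ (m : ι) (c : G m), c ∉ (φ m).range → i₁ ≠ m → False := by
    intro m c hc hmi
    have hc1 : c ≠ 1 := fun h => hc (h ▸ one_mem _)
    have hfstIdx : L'.fstIdx ≠ some m := by
      show (Option.map Sigma.fst (l'.head?)) ≠ some m
      rw [hl']
      simpa using hmi
    set W1 := Word.cons c L' hfstIdx hc1 with hW1
    have hW1list : W1.toList = ⟨m, c⟩ :: l' := rfl
    have hW1red : Reduced φ W1 := by
      intro p hp
      rw [hW1list] at hp
      rcases List.mem_cons.mp hp with rfl | hp
      · exact hc
      · exact hl'nr _ hp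
    have hW1prod : pprod φ W1.toList = PushoutI.of m c * x := by
      rw [hW1list, pprod_cons, hL'prod]
    have hl'nil : l' ≠ [] := List.cons_ne_nil _ _
    rcases hpl : l'.getLast hl'nil with ⟨e, ge⟩
    have hsplit : l' = l'.dropLast ++ [⟨e, ge⟩] := by
      rw [← hpl]; exact (List.dropLast_append_getLast hl'nil).symm
    by_cases hem : e = m
    · subst hem
      set D := l'.dropLast with hD
      have hsplit2 : l' = D ++ [⟨e, ge⟩] := by
        rw [hD, ← hpl]; exact (List.dropLast_append_getLast hl'nil).symm
      have hDsub : ∀ p ∈ D, p ∈ l' := fun p hp => by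
        rw [hD] at hp; exact List.dropLast_subset _ hp
      have hDne : D ≠ [] := by
        intro h
        rw [h, List.nil_append] at hsplit2
        have h2 := hsplit2.symm.trans hl'
        have h3 := congrArg (fun z : List (Σ k, G k) => z.head?) h2
        simp only [List.head?_cons] at h3
        have h4 := congrArg (fun z : Option (Σ k, G k) => z.map Sigma.fst) h3
        simp only [Option.map_some] at h4
        exact hmi (Option.some.inj h4).symm
      have hch2 := hchain
      rw [hsplit2] at hch2
      obtain ⟨hcD, -, hlastD⟩ := List.isChain_append.mp hch2
      have hxy : x * PushoutI.of e c = pprod φ D * PushoutI.of e (ge * c) := by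
        rw [← hL'prod, hsplit2]
        simp [pprod_append, pprod_cons, map_mul, mul_assoc]
      by_cases hgc : ge * c ∈ (φ e).range
      · obtain ⟨r, hr⟩ := hgc
        rcases hql : D.getLast hDne with ⟨k, gk⟩
        set E := D.dropLast with hE
        have hDsp : D = E ++ [⟨k, gk⟩] := by
          rw [hE, ← hql]; exact (List.dropLast_append_getLast hDne).symm
        have hEsub : ∀ p ∈ E, p ∈ D := fun p hp => by
          rw [hE] at hp; exact List.dropLast_subset _ hp
        have hkl' : (⟨k, gk⟩ : Σ k, G k) ∈ l' := hDsub _ (hql ▸ List.getLast_mem hDne)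
        have hgk : gk ∉ (φ k).range := hl'nr ⟨k, gk⟩ hkl'
        have hgkr : gk * φ k r ∉ (φ k).range := fun hmem =>
          hgk ((mul_mem_cancel_right (MonoidHom.mem_range.mpr ⟨r, rfl⟩)).mp hmem)
        have hch3 := hcD
        rw [hDsp] at hch3
        obtain ⟨hcE, -, hlastE⟩ := List.isChain_append.mp hch3
        have hchW3 : (E ++ [⟨k, gk * φ k r⟩] : List (Σ k, G k)).Chain'
            (fun p q => p.1 ≠ q.1) := by
          refine List.isChain_append.mpr ⟨hcE, List.isChain_singleton _, ?_⟩
          intro p hp q hq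
          simp only [List.head?_cons, Option.mem_def, Option.some.injEq] at hq
          subst hq
          exact hlastE p hp ⟨k, gk⟩ (by simp)
        set W3 : Word G := ⟨E ++ [⟨k, gk * φ k r⟩],
          by
            intro p hp
            rcases List.mem_append.mp hp with hp | hp
            · exact hl'ne1 p (hDsub p (hEsub p hp))
            · simp only [List.mem_singleton] at hp
              subst hp
              exact fun h1 => hgkr (by
                rw [show gk * (φ k) r = 1 from h1]; exact one_mem _),
          by exact hchW3⟩ with hW3
        have hW3red : Reduced φ W3 := by
          intro p hp
          rcases List.mem_append.mp hp with hp | hp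
          · exact hl'nr p (hDsub p (hEsub p hp))
          · simp only [List.mem_singleton] at hp
            subst hp
            exact hgkr
        have hW3prod : pprod φ W3.toList = x * PushoutI.of e c := by
          show pprod φ (E ++ [⟨k, gk * φ k r⟩]) = _
          rw [hxy, ← hr, of_apply_eq_base φ e r]
          calc pprod φ (E ++ [⟨k, gk * φ k r⟩])
              = pprod φ E * (PushoutI.of k gk * PushoutI.of k (φ k r)) := by
                simp [pprod_append, pprod_cons, map_mul, mul_assoc]
            _ = (pprod φ E * PushoutI.of k gk) * base φ r := by
                rw [of_apply_eq_base φ k r, mul_assoc]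
            _ = pprod φ D * base φ r := by
                rw [hDsp]; simp [pprod_append, pprod_cons, mul_assoc]
        have heq := reduced_fst_eq hφ hW1red hW3red
          (by rw [hW1prod, hW3prod, hcomm])
        have hlen := congrArg List.length heq
        rw [hW1list] at hlen
        show False
        rw [show W3.toList = E ++ [⟨k, gk * φ k r⟩] from rfl, hsplit2, hDsp] at hlen
        simp only [List.length_map, List.length_cons, List.length_append,
          List.length_singleton] at hlen
        omega
      · set W2 : Word G := ⟨D ++ [⟨e, ge * c⟩],
          by
            intro p hp
            rcases List.mem_append.mp hp with hp | hp
            · exact hl'ne1 p (hDsub p hp)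
            · simp only [List.mem_singleton] at hp
              subst hp
              exact fun h1 => hgc (by
                rw [show ge * c = 1 from h1]; exact one_mem _),
          by
            refine List.isChain_append.mpr ⟨hcD, List.isChain_singleton _, ?_⟩
            intro p hp q hq
            simp only [List.head?_cons, Option.mem_def, Option.some.injEq] at hq
            subst hq
            exact hlastD p hp ⟨e, ge⟩ (by simp)⟩ with hW2
        have hW2red : Reduced φ W2 := by
          intro p hp
          rcases List.mem_append.mp hp with hp | hp
          · exact hl'nr p (hDsub p hp)
          · simp only [List.mem_singleton] at hp
            subst hp
            exact hgc
        have hW2prod : pprod φ W2.toList = x * PushoutI.of e c := by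
          show pprod φ (D ++ [⟨e, ge * c⟩]) = _
          rw [hxy]
          simp [pprod_append, pprod_cons, mul_assoc]
        have heq := reduced_fst_eq hφ hW1red hW2red
          (by rw [hW1prod, hW2prod, hcomm])
        have hlen := congrArg List.length heq
        rw [hW1list] at hlen
        show False
        rw [show W2.toList = D ++ [⟨e, ge * c⟩] from rfl, hsplit2] at hlen
        simp only [List.length_map, List.length_cons, List.length_append,
          List.length_singleton] at hlen
        omega
    · set W2 : Word G := ⟨l' ++ [⟨m, c⟩],
        by
          intro p hp
          rcases List.mem_append.mp hp with hp | hp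
          · exact hl'ne1 p hp
          · simp only [List.mem_singleton] at hp
            subst hp
            exact hc1,
        by
          refine List.isChain_append.mpr ⟨hchain, List.isChain_singleton _, ?_⟩
          intro p hp q hq
          simp only [List.head?_cons, Option.mem_def, Option.some.injEq] at hq
          subst hq
          rw [List.getLast?_eq_getLast hl'nil, Option.mem_def] at hp
          have hp2 := Option.some.inj hp
          rw [← hp2, hpl]
          exact hem⟩ with hW2
      have hW2red : Reduced φ W2 := by
        intro p hp
        rcases List.mem_append.mp hp with hp | hp
        · exact hl'nr p hp
        · simp only [List.mem_singleton] at hp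
          subst hp
          exact hc
      have hW2prod : pprod φ W2.toList = x * PushoutI.of m c := by
        show pprod φ (l' ++ [⟨m, c⟩]) = _
        rw [pprod_append, hL'prod]
        simp
      have heq := reduced_fst_eq hφ hW1red hW2red
        (by rw [hW1prod, hW2prod, hcomm])
      rw [hW1list] at heq
      rw [hl'] at heq
      simp only [List.map_cons, List.map_append, List.cons_append] at heq
      exact hmi (List.head_eq_of_cons_eq heq).symm
  by_cases hii : i₁ = i
  · exact main j b hb (fun h => hij (hii.symm.trans h))
  · exact main i a ha hii

end PCenter



namespace RAAGPaper

variable {V : Type}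

section Infra

variable {K : Type*} [Group K] {G : SimpleGraph V}

/-- universal property builder -/
def toGrp (G : SimpleGraph V) (f : V → K)
    (hf : ∀ v w, G.Adj v w → Commute (f v) (f w)) : RAAG G →* K :=
  PresentedGroup.toGroup (f := f) (by
    rintro r ⟨v, w, hadj, rfl⟩
    rw [map_commutatorElement]
    simp only [FreeGroup.lift_apply_of]
    exact commutatorElement_eq_one_iff_commute.mpr (hf v w hadj))

@[simp] lemma toGrp_gen (f : V → K) (hf : ∀ v w, G.Adj v w → Commute (f v) (f w)) (v : V) :
    toGrp G f hf (gen G v) = f v :=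
  PresentedGroup.toGroup.of _

lemma raag_hom_ext {f g : RAAG G →* K} (h : ∀ v, f (gen G v) = g (gen G v)) : f = g :=
  PresentedGroup.ext h

lemma closure_gens : Subgroup.closure (Set.range (gen G)) = ⊤ :=
  PresentedGroup.closure_range_of _

open scoped commutatorElement in
lemma gen_comm {v w : V} (h : G.Adj v w) : Commute (gen G v) (gen G w) := by
  rw [← commutatorElement_eq_one_iff_commute]
  have : PresentedGroup.mk (raagRels G) ⁅FreeGroup.of v, FreeGroup.of w⁆ = 1 := by
    apply (QuotientGroup.eq_one_iff _).mpr
    exact Subgroup.subset_normalClosure ⟨v, w, h, rfl⟩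
  rw [← this, map_commutatorElement]
  rfl

/-- everything is generated -/
lemma raag_induction {p : RAAG G → Prop} (g : RAAG G)
    (gens : ∀ v, p (gen G v)) (one : p 1) (mul : ∀ a b, p a → p b → p (a * b))
    (inv : ∀ a, p a → p a⁻¹) : p g := by
  have hg : g ∈ Subgroup.closure (Set.range (gen G)) := by
    rw [closure_gens]; trivial
  exact Subgroup.closure_induction (fun x hx => by obtain ⟨v, rfl⟩ := hx; exact gens v)
    one (fun a b _ _ ha hb => mul a b ha hb) (fun a _ ha => inv a ha) hg

end Infra

section Homs

variable {G : SimpleGraph V}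

open Classical in
/-- inclusion of the RAAG on an induced subgraph -/
noncomputable def incl (G : SimpleGraph V) (S : Set V) :
    RAAG (SimpleGraph.induce S G) →* RAAG G :=
  toGrp _ (fun u => gen G u.1) (by
    intro u w h
    exact gen_comm (by simpa using h))

open Classical in
/-- the retraction killing generators outside `S` -/
noncomputable def kill (G : SimpleGraph V) (S : Set V) :
    RAAG G →* RAAG (SimpleGraph.induce S G) :=
  toGrp _ (fun v => if h : v ∈ S then gen _ (⟨v, h⟩ : S) else 1) (by
    intro v w h
    by_cases hv : v ∈ S <;> by_cases hw : w ∈ S <;>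
      simp only [dif_pos, dif_neg, hv, hw]
    · exact gen_comm (by simpa using h)
    all_goals first | exact Commute.one_right _ | exact Commute.one_left _)

@[simp] lemma incl_gen (S : Set V) (u : S) :
    incl G S (gen _ u) = gen G u.1 := by
  simp [incl]

@[simp] lemma kill_gen_mem (S : Set V) {v : V} (h : v ∈ S) :
    kill G S (gen G v) = gen _ (⟨v, h⟩ : S) := by
  simp [kill, dif_pos h]

@[simp] lemma kill_gen_not_mem (S : Set V) {v : V} (h : v ∉ S) :
    kill G S (gen G v) = 1 := by
  simp [kill, dif_neg h]

lemma kill_incl (S : Set V) : (kill G S).comp (incl G S) = MonoidHom.id _ := by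
  apply raag_hom_ext
  rintro ⟨v, hv⟩
  rw [MonoidHom.comp_apply, MonoidHom.id_apply, incl_gen, kill_gen_mem S hv]

lemma incl_injective (S : Set V) : Function.Injective (incl G S) := by
  intro x y h
  have := congrArg (kill G S) h
  have hx := congrFun (congrArg DFunLike.coe (kill_incl (G := G) S))
  simpa [MonoidHom.comp_apply] using (hx x).symm.trans ((congrArg (kill G S) h).trans (hx y))

/-- special subgroup -/
def Sub (G : SimpleGraph V) (S : Set V) : Subgroup (RAAG G) :=
  Subgroup.closure (gen G '' S)

lemma incl_range_le_Sub (S : Set V) : (incl G S).range ≤ Sub G S := by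
  rintro x ⟨y, rfl⟩
  induction y using raag_induction with
  | gens u => exact Subgroup.subset_closure ⟨u.1, u.2, by simp⟩
  | one => simp only [map_one]; exact one_mem _
  | mul a b ha hb => rw [map_mul]; exact mul_mem ha hb
  | inv a ha => rw [map_inv]; exact inv_mem ha

lemma retr_fix {S : Set V} {g : RAAG G} (h : g ∈ Sub G S) :
    incl G S (kill G S g) = g := by
  induction h using Subgroup.closure_induction with
  | mem x hx => obtain ⟨v, hv, rfl⟩ := hx; simp [kill_gen_mem S hv]
  | one => simp
  | mul a b _ _ ha hb => simp [map_mul, ha, hb]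
  | inv a _ ha => simp [map_inv, ha]

lemma retr_mem_inter {S T : Set V} {g : RAAG G} (hS : g ∈ Sub G S) :
    incl G T (kill G T g) ∈ Sub G (S ∩ T) := by
  induction hS using Subgroup.closure_induction with
  | mem x hx =>
    obtain ⟨v, hv, rfl⟩ := hx
    by_cases hT : v ∈ T
    · rw [kill_gen_mem T hT, incl_gen]
      exact Subgroup.subset_closure ⟨v, ⟨hv, hT⟩, rfl⟩
    · rw [kill_gen_not_mem T hT]; simp only [map_one]; exact one_mem _
  | one => simp only [map_one]; exact one_mem _
  | mul a b _ _ ha hb => rw [map_mul, map_mul]; exact mul_mem ha hb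
  | inv a _ ha => rw [map_inv, map_inv]; exact inv_mem ha

lemma mem_Sub_inter {S T : Set V} {g : RAAG G} (hS : g ∈ Sub G S) (hT : g ∈ Sub G T) :
    g ∈ Sub G (S ∩ T) := by
  rw [← retr_fix hT]
  exact retr_mem_inter hS

lemma Sub_univ_top : Sub G Set.univ = ⊤ := by
  show Subgroup.closure (gen G '' Set.univ) = ⊤
  rw [Set.image_univ]
  exact closure_gens

lemma Sub_empty : Sub G (∅ : Set V) = ⊥ := by
  simp [Sub]

end Homs


section Nested

variable {G : SimpleGraph V}

/-- inclusion between special subgroup RAAGs -/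
noncomputable def inclSub (G : SimpleGraph V) {S T : Set V} (h : S ⊆ T) :
    RAAG (SimpleGraph.induce S G) →* RAAG (SimpleGraph.induce T G) :=
  toGrp _ (fun u => gen _ (Set.inclusion h u)) (by
    intro u w hadj
    exact gen_comm (by simpa using hadj))

@[simp] lemma inclSub_gen {S T : Set V} (h : S ⊆ T) (u : S) :
    inclSub G h (gen _ u) = gen _ (Set.inclusion h u) := by
  simp [inclSub]

open Classical in
noncomputable def killSub (G : SimpleGraph V) {S T : Set V} (h : S ⊆ T) :
    RAAG (SimpleGraph.induce T G) →* RAAG (SimpleGraph.induce S G) :=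
  toGrp _ (fun u => if hu : u.1 ∈ S then gen _ (⟨u.1, hu⟩ : S) else 1) (by
    intro u w hadj
    by_cases hu : u.1 ∈ S <;> by_cases hw : w.1 ∈ S <;>
      simp only [dif_pos, dif_neg, hu, hw]
    · exact gen_comm (by simpa using hadj)
    all_goals first | exact Commute.one_right _ | exact Commute.one_left _)

lemma killSub_inclSub {S T : Set V} (h : S ⊆ T) :
    (killSub G h).comp (inclSub G h) = MonoidHom.id _ := by
  apply raag_hom_ext
  rintro ⟨u, hu⟩
  rw [MonoidHom.comp_apply, MonoidHom.id_apply, inclSub_gen]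
  show killSub G h (gen _ (⟨u, h hu⟩ : T)) = _
  simp [killSub, dif_pos hu]

lemma inclSub_injective {S T : Set V} (h : S ⊆ T) :
    Function.Injective (inclSub G h) := by
  intro x y hxy
  have hid := congrFun (congrArg DFunLike.coe (killSub_inclSub (G := G) h))
  exact (hid x).symm.trans ((congrArg (killSub G h) hxy).trans (hid y))

open Classical in
/-- exponent-sum homomorphism detecting a vertex -/
noncomputable def expAt (G : SimpleGraph V) (v₀ : V) : RAAG G →* Multiplicative ℤ :=
  toGrp _ (fun v => if v = v₀ then Multiplicative.ofAdd (1 : ℤ) else 1)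
    (fun _ _ _ => Commute.all _ _)

open Classical in
@[simp] lemma expAt_gen (G : SimpleGraph V) (v₀ v : V) :
    expAt G v₀ (gen G v) = if v = v₀ then Multiplicative.ofAdd (1 : ℤ) else 1 := by
  simp [expAt]

lemma gen_not_mem_inclSub_range {S T : Set V} (h : S ⊆ T) {v₀ : V} (hv₀ : v₀ ∈ T)
    (hv₀S : v₀ ∉ S) : gen (SimpleGraph.induce T G) ⟨v₀, hv₀⟩ ∉ (inclSub G h).range := by
  rintro ⟨x, hx⟩
  have h1 : (expAt (SimpleGraph.induce T G) ⟨v₀, hv₀⟩).comp (inclSub G h) = 1 := by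
    apply raag_hom_ext
    rintro ⟨u, hu⟩
    rw [MonoidHom.comp_apply, inclSub_gen]
    show expAt _ _ (gen _ (⟨u, h hu⟩ : T)) = 1
    rw [expAt_gen, if_neg]
    intro heq
    have : u = v₀ := congrArg Subtype.val heq
    exact hv₀S (this ▸ hu)
  have h2 := congrArg (expAt (SimpleGraph.induce T G) ⟨v₀, hv₀⟩) hx
  rw [← MonoidHom.comp_apply, h1, MonoidHom.one_apply] at h2
  rw [expAt_gen, if_pos rfl] at h2
  exact one_ne_zero (ofAdd_eq_one.mp h2.symm)

end Nested

section Decomp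

open Monoid Monoid.PushoutI Function

variable {W : Type} (H : SimpleGraph W) (v : W)

/-- the two sides of the amalgam decomposition at a vertex -/
def SidesSet : Bool → Set W := fun b => bif b then st H v else {v}ᶜ

lemma lk_subset_Sides : ∀ b, lk H v ⊆ SidesSet H v b := by
  intro b
  cases b
  · intro u hu
    simp only [SidesSet, cond_false, Set.mem_compl_iff, Set.mem_singleton_iff]
    intro h
    exact H.irrefl (h ▸ hu)
  · exact Set.subset_insert _ _

/-- the amalgam maps -/
noncomputable def pushφ : ∀ b : Bool,
    RAAG (SimpleGraph.induce (lk H v) H) →* RAAG (SimpleGraph.induce (SidesSet H v b) H) :=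
  fun b => inclSub H (lk_subset_Sides H v b)

lemma pushφ_injective : ∀ b, Function.Injective (pushφ H v b) :=
  fun b => inclSub_injective _

lemma mem_Sides_true_of_lk {u : W} (hu : u ∈ lk H v) : u ∈ SidesSet H v true :=
  Set.mem_insert_of_mem _ hu

lemma v_mem_Sides_true : v ∈ SidesSet H v true := Set.mem_insert _ _

lemma mem_Sides_false {u : W} (hu : u ≠ v) : u ∈ SidesSet H v false := by
  simp only [SidesSet, cond_false, Set.mem_compl_iff, Set.mem_singleton_iff]
  exact hu

lemma of_false_eq_of_true {u : W} (hu : u ∈ lk H v) :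
    PushoutI.of (φ := pushφ H v) false
        (gen _ ⟨u, mem_Sides_false H v (fun h => H.irrefl (h ▸ hu))⟩) =
      PushoutI.of (φ := pushφ H v) true (gen _ ⟨u, mem_Sides_true_of_lk H v hu⟩) := by
  have h1 : pushφ H v false (gen _ (⟨u, hu⟩ : lk H v)) =
      gen _ ⟨u, mem_Sides_false H v (fun h => H.irrefl (h ▸ hu))⟩ := by
    rw [pushφ, inclSub_gen]
  have h2 : pushφ H v true (gen _ (⟨u, hu⟩ : lk H v)) =
      gen _ ⟨u, mem_Sides_true_of_lk H v hu⟩ := by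
    rw [pushφ, inclSub_gen]
  rw [← h1, ← h2, of_apply_eq_base, of_apply_eq_base]

open Classical in
/-- the image of a generator in the pushout -/
noncomputable def pushGen (u : W) : PushoutI (pushφ H v) :=
  if h : u = v then PushoutI.of (φ := pushφ H v) true (gen _ ⟨u, h ▸ v_mem_Sides_true H v⟩)
  else PushoutI.of (φ := pushφ H v) false (gen _ ⟨u, mem_Sides_false H v h⟩)

lemma pushGen_commute {u w : W} (hadj : H.Adj u w) :
    Commute (pushGen H v u) (pushGen H v w) := by
  classical
  by_cases hu : u = v <;> by_cases hw : w = v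
  · exact absurd (hu ▸ hw ▸ hadj) (H.irrefl)
  · subst hu
    rw [pushGen, pushGen, dif_pos rfl, dif_neg hw,
      of_false_eq_of_true H u (by exact hadj)]
    apply Commute.map
    exact gen_comm (by
      simp only [SimpleGraph.comap_adj, Function.Embedding.coe_subtype]
      exact hadj)
  · subst hw
    rw [pushGen, pushGen, dif_pos rfl, dif_neg hu,
      of_false_eq_of_true H w (by exact hadj.symm)]
    apply (Commute.map ?_ _).symm
    exact (gen_comm (by
      simp only [SimpleGraph.comap_adj, Function.Embedding.coe_subtype]
      exact hadj.symm))
  · rw [pushGen, pushGen, dif_neg hu, dif_neg hw]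
    apply Commute.map
    exact gen_comm (by
      simp only [SimpleGraph.comap_adj, Function.Embedding.coe_subtype]
      exact hadj)

/-- the map from the RAAG into the pushout -/
noncomputable def toPush : RAAG H →* PushoutI (pushφ H v) :=
  toGrp H (pushGen H v) (fun _ _ hadj => pushGen_commute H v hadj)

/-- the map back -/
noncomputable def fromPush : PushoutI (pushφ H v) →* RAAG H :=
  PushoutI.lift (fun b => incl H (SidesSet H v b)) (incl H (lk H v)) (by
    intro b
    apply raag_hom_ext
    rintro ⟨u, hu⟩
    rw [MonoidHom.comp_apply]
    show incl H _ (pushφ H v b (gen _ _)) = _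
    rw [pushφ, inclSub_gen, incl_gen, incl_gen])

lemma fromPush_toPush : (fromPush H v).comp (toPush H v) = MonoidHom.id _ := by
  classical
  apply raag_hom_ext
  intro u
  rw [MonoidHom.comp_apply, MonoidHom.id_apply, toPush, toGrp_gen]
  by_cases h : u = v
  · rw [pushGen, dif_pos h, fromPush, PushoutI.lift_of, incl_gen]
  · rw [pushGen, dif_neg h, fromPush, PushoutI.lift_of, incl_gen]

lemma toPush_fromPush : (toPush H v).comp (fromPush H v) = MonoidHom.id _ := by
  apply PushoutI.hom_ext_nonempty
  intro b
  apply raag_hom_ext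
  rintro ⟨u, hu⟩
  simp only [MonoidHom.comp_apply, MonoidHom.id_apply]
  rw [fromPush, PushoutI.lift_of, incl_gen, toPush, toGrp_gen]
  cases b
  · have hune : u ≠ v := hu
    rw [pushGen, dif_neg hune]
  · by_cases h : u = v
    · subst h
      rw [pushGen, dif_pos rfl]
    · rw [pushGen, dif_neg h]
      have hulk : u ∈ lk H v := by
        rcases hu with h' | h'
        · exact absurd h' h
        · exact h'
      exact of_false_eq_of_true H v hulk

lemma toPush_surjective : Function.Surjective (toPush H v) := by
  intro x
  refine ⟨fromPush H v x, ?_⟩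
  have := congrFun (congrArg DFunLike.coe (toPush_fromPush H v)) x
  simpa using this

/-- key step: central elements lie in the special subgroup on any link -/
lemma center_mem_Sub_lk {u₀ : W} (hu₀v : u₀ ≠ v) (hu₀a : ¬H.Adj v u₀)
    {g : RAAG H} (hg : g ∈ Subgroup.center (RAAG H)) : g ∈ Sub H (lk H v) := by
  classical
  have hcentral : toPush H v g ∈ Subgroup.center (PushoutI (pushφ H v)) := by
    rw [Subgroup.mem_center_iff]
    intro y
    obtain ⟨z, rfl⟩ := toPush_surjective H v y
    rw [← map_mul, ← map_mul, Subgroup.mem_center_iff.mp hg z]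
  have ha : gen (SimpleGraph.induce (SidesSet H v false) H) ⟨u₀, mem_Sides_false H v hu₀v⟩ ∉
      (pushφ H v false).range := by
    rw [pushφ]
    exact gen_not_mem_inclSub_range _ _ (fun h => hu₀a h)
  have hb : gen (SimpleGraph.induce (SidesSet H v true) H) ⟨v, v_mem_Sides_true H v⟩ ∉
      (pushφ H v true).range := by
    rw [pushφ]
    exact gen_not_mem_inclSub_range _ _ (fun h => H.irrefl h)
  have hbase := PCenter.center_le_base_range (pushφ_injective H v)
    (Bool.false_ne_true) ha hb hcentral
  obtain ⟨c₀, hc₀⟩ := hbase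
  have hg2 : g = incl H (lk H v) c₀ := by
    have h1 := congrFun (congrArg DFunLike.coe (fromPush_toPush H v)) g
    simp only [MonoidHom.comp_apply, MonoidHom.id_apply] at h1
    rw [← h1, ← hc₀]
    show fromPush H v (PushoutI.base (pushφ H v) c₀) = _
    rw [fromPush, PushoutI.lift_base]
  rw [hg2]
  exact incl_range_le_Sub _ ⟨c₀, rfl⟩

/-- The center of the RAAG on a graph in which every vertex has a non-neighbour
is trivial. -/
theorem center_eq_one {W : Type} [Finite W] (H : SimpleGraph W)
    (hnb : ∀ v : W, ∃ u, u ≠ v ∧ ¬H.Adj v u)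
    {g : RAAG H} (hg : g ∈ Subgroup.center (RAAG H)) : g = 1 := by
  classical
  have : Fintype W := Fintype.ofFinite W
  have h1 : ∀ v : W, g ∈ Sub H (lk H v) := by
    intro v
    obtain ⟨u₀, hu₀v, hu₀a⟩ := hnb v
    exact center_mem_Sub_lk H v hu₀v hu₀a hg
  have h2 : ∀ s : Finset W, g ∈ Sub H (⋂ v ∈ s, lk H v) := by
    intro s
    induction s using Finset.induction_on with
    | empty =>
      rw [show (⋂ v ∈ (∅ : Finset W), lk H v) = Set.univ by simp, Sub_univ_top]
      trivial
    | @insert a s ha ih =>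
      rw [Finset.set_biInter_insert]
      exact mem_Sub_inter (h1 a) ih
  have h3 : (⋂ v ∈ (Finset.univ : Finset W), lk H v) = (∅ : Set W) := by
    ext u
    simp only [Set.mem_iInter, Set.mem_empty_iff_false, iff_false, not_forall]
    exact ⟨u, Finset.mem_univ u, fun h => H.irrefl h⟩
  have h4 := h2 Finset.univ
  rw [h3, Sub_empty] at h4
  exact Subgroup.mem_bot.mp h4

end Decomp


section Main

variable [Fintype V]

theorem projection_surjective_split_aux (G : SimpleGraph V)
    (Z : Set V) (hZdef : Z = {v : V | ∀ w, w ≠ v → G.Adj v w}) :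
    ∃ q : RAAG G →* RAAG (SimpleGraph.induce (Zᶜ : Set V) G),
      (∀ (v : V) (hv : v ∈ (Zᶜ : Set V)),
          q (gen G v) = gen (SimpleGraph.induce (Zᶜ : Set V) G) ⟨v, hv⟩) ∧
      (∀ v ∈ Z, q (gen G v) = 1) ∧
      Function.Surjective q ∧
      q.ker = Subgroup.normalClosure (gen G '' Z) ∧
      (∀ φ : MulAut (RAAG G),
          ∃ ψ : MulAut (RAAG (SimpleGraph.induce (Zᶜ : Set V) G)),
            ∀ g, q (φ g) = ψ (q g)) ∧
      (∀ (φ : MulAut (RAAG G))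
          (ψ : MulAut (RAAG (SimpleGraph.induce (Zᶜ : Set V) G))),
          (∀ g, q (φ g) = ψ (q g)) →
          (∃ a, ∀ g, φ g = a * g * a⁻¹) → ∃ b, ∀ h, ψ h = b * h * b⁻¹) ∧
      (∀ ψ : MulAut (RAAG (SimpleGraph.induce (Zᶜ : Set V) G)),
          ∃ φ : MulAut (RAAG G),
            (∀ g, q (φ g) = ψ (q g)) ∧ ∀ v ∈ Z, φ (gen G v) = gen G v) := by
  classical
  set q : RAAG G →* RAAG (SimpleGraph.induce (Zᶜ : Set V) G) := kill G (Zᶜ : Set V) with hq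
  set i : RAAG (SimpleGraph.induce (Zᶜ : Set V) G) →* RAAG G := incl G (Zᶜ : Set V) with hi
  have hqi : ∀ x, q (i x) = x := by
    intro x
    have := congrFun (congrArg DFunLike.coe (kill_incl (G := G) (Zᶜ : Set V))) x
    simpa using this
  have hq_mem : ∀ (v : V) (hv : v ∈ (Zᶜ : Set V)),
      q (gen G v) = gen (SimpleGraph.induce (Zᶜ : Set V) G) ⟨v, hv⟩ :=
    fun v hv => kill_gen_mem _ hv
  have hq_Z : ∀ v ∈ Z, q (gen G v) = 1 := fun v hv =>
    kill_gen_not_mem _ (by simp only [Set.mem_compl_iff, not_not]; exact hv)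
  have hi_gen : ∀ (v : V) (hv : v ∈ (Zᶜ : Set V)),
      i (gen (SimpleGraph.induce (Zᶜ : Set V) G) ⟨v, hv⟩) = gen G v :=
    fun v hv => incl_gen _ _
  have hsurj : Function.Surjective q := fun y => ⟨i y, hqi y⟩
  -- generators of Z are central
  have hcomm_gen : ∀ v ∈ Z, ∀ w, Commute (gen G w) (gen G v) := by
    intro v hv w
    by_cases hwv : w = v
    · subst hwv; exact Commute.refl _
    · have hadj : G.Adj v w := by
        rw [hZdef] at hv
        exact hv w hwv
      exact (gen_comm hadj).symm
  have hZcentral : ∀ v ∈ Z, gen G v ∈ Subgroup.center (RAAG G) := by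
    intro v hv
    rw [Subgroup.mem_center_iff]
    intro h
    show Commute h (gen G v)
    induction h using raag_induction with
    | gens w => exact hcomm_gen v hv w
    | one => exact Commute.one_left _
    | mul a b ha hb => exact Commute.mul_left ha hb
    | inv a ha => exact Commute.inv_left ha
  -- center of the quotient RAAG is trivial
  have hΔcenter : ∀ x ∈ Subgroup.center (RAAG (SimpleGraph.induce (Zᶜ : Set V) G)),
      x = 1 := by
    intro x hx
    refine center_eq_one _ ?_ hx
    rintro ⟨v, hv⟩
    have hv' : v ∉ Z := hv
    rw [hZdef] at hv'
    simp only [Set.mem_setOf_eq] at hv'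
    push_neg at hv'
    obtain ⟨w, hwv, hwa⟩ := hv'
    have hwZ : w ∈ (Zᶜ : Set V) := by
      intro hwZ
      rw [hZdef] at hwZ
      exact hwa (hwZ v (fun h => hwv (h.symm))).symm
    refine ⟨⟨w, hwZ⟩, ?_, ?_⟩
    · intro h
      exact hwv (congrArg Subtype.val h)
    · simp only [SimpleGraph.comap_adj, Function.Embedding.coe_subtype]
      exact hwa
  have hqc : ∀ x ∈ Subgroup.center (RAAG G), q x = 1 := by
    intro x hx
    apply hΔcenter
    rw [Subgroup.mem_center_iff]
    intro y
    obtain ⟨z, rfl⟩ := hsurj y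
    rw [← map_mul, ← map_mul, Subgroup.mem_center_iff.mp hx z]
  have hmaut_center : ∀ (φ : MulAut (RAAG G)), ∀ x ∈ Subgroup.center (RAAG G),
      φ x ∈ Subgroup.center (RAAG G) := by
    intro φ x hx
    rw [Subgroup.mem_center_iff]
    intro y
    calc y * φ x = φ (φ.symm y * x) := by rw [map_mul, MulEquiv.apply_symm_apply]
      _ = φ (x * φ.symm y) := by rw [Subgroup.mem_center_iff.mp hx (φ.symm y)]
      _ = φ x * y := by rw [map_mul, MulEquiv.apply_symm_apply]
  -- the descended endomorphism
  have hint : ∀ φ : MulAut (RAAG G), ∀ g,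
      q (φ g) = (q.comp (φ.toMonoidHom.comp i)) (q g) := by
    intro φ
    have hhom : q.comp φ.toMonoidHom = (q.comp (φ.toMonoidHom.comp i)).comp q := by
      apply raag_hom_ext
      intro v
      by_cases hv : v ∈ Z
      · simp only [MonoidHom.comp_apply, MulEquiv.coe_toMonoidHom]
        rw [hq_Z v hv, map_one, map_one, map_one]
        exact hqc _ (hmaut_center φ _ (hZcentral v hv))
      · simp only [MonoidHom.comp_apply, MulEquiv.coe_toMonoidHom]
        rw [hq_mem v hv, hi_gen v hv]
    intro g
    exact congrFun (congrArg DFunLike.coe hhom) g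
  have hdesc : ∀ φ : MulAut (RAAG G),
      ∃ ψ : MulAut (RAAG (SimpleGraph.induce (Zᶜ : Set V) G)),
        ∀ g, q (φ g) = ψ (q g) := by
    intro φ
    refine ⟨{ toFun := q.comp (φ.toMonoidHom.comp i)
              invFun := q.comp ((φ⁻¹ : MulAut (RAAG G)).toMonoidHom.comp i)
              left_inv := ?_
              right_inv := ?_
              map_mul' := map_mul _ }, ?_⟩
    · intro x
      obtain ⟨z, rfl⟩ := hsurj x
      rw [← hint φ z, ← hint φ⁻¹ (φ z)]
      show q ((φ⁻¹ : MulAut (RAAG G)) (φ z)) = q z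
      rw [MulAut.inv_apply_self]
    · intro x
      obtain ⟨z, rfl⟩ := hsurj x
      rw [← hint φ⁻¹ z, ← hint φ (φ⁻¹ z)]
      show q (φ ((φ⁻¹ : MulAut (RAAG G)) z)) = q z
      rw [MulAut.apply_inv_self]
    · exact hint φ
  refine ⟨q, hq_mem, hq_Z, hsurj, ?_, hdesc, ?_, ?_⟩
  · -- kernel computation
    apply le_antisymm
    · intro g hg
      set N := Subgroup.normalClosure (gen G '' Z) with hN
      have hkey : ((QuotientGroup.mk' N).comp i).comp q = QuotientGroup.mk' N := by
        apply raag_hom_ext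
        intro v
        by_cases hv : v ∈ Z
        · rw [MonoidHom.comp_apply, MonoidHom.comp_apply, hq_Z v hv, map_one, map_one]
          exact ((QuotientGroup.eq_one_iff _).mpr
            (Subgroup.subset_normalClosure (Set.mem_image_of_mem _ hv))).symm
        · rw [MonoidHom.comp_apply, MonoidHom.comp_apply, hq_mem v hv, hi_gen v hv]
      have h1 : QuotientGroup.mk' N g = 1 := by
        rw [← congrFun (congrArg DFunLike.coe hkey) g]
        simp only [MonoidHom.comp_apply]
        rw [MonoidHom.mem_ker.mp hg, map_one, map_one]
      exact (QuotientGroup.eq_one_iff _).mp h1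
    · apply Subgroup.normalClosure_le_normal
      rintro x ⟨v, hv, rfl⟩
      exact MonoidHom.mem_ker.mpr (hq_Z v hv)
  · -- inner automorphisms map to inner automorphisms
    intro φ ψ hcomp hin
    obtain ⟨a, haa⟩ := hin
    refine ⟨q a, ?_⟩
    intro h
    obtain ⟨z, rfl⟩ := hsurj h
    rw [← hcomp z, haa z]
    simp [map_mul]
  · -- the splitting
    intro ψ
    have hmkφ : ∀ ψ' : MulAut (RAAG (SimpleGraph.induce (Zᶜ : Set V) G)),
        ∀ v w, G.Adj v w → Commute
          ((fun u => if h : u ∈ Z then gen G u else i (ψ' (gen _ (⟨u, h⟩ : (Zᶜ : Set V))))) v)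
          ((fun u => if h : u ∈ Z then gen G u else i (ψ' (gen _ (⟨u, h⟩ : (Zᶜ : Set V))))) w) := by
      intro ψ' v w hadj
      by_cases hv : v ∈ Z <;> by_cases hw : w ∈ Z <;>
        simp only [dif_pos, dif_neg, hv, hw]
      · exact hcomm_gen w hw v
      · exact (show Commute _ (gen G v) from
          Subgroup.mem_center_iff.mp (hZcentral v hv) _).symm
      · exact Subgroup.mem_center_iff.mp (hZcentral w hw) _
      · have hadj' : (SimpleGraph.induce (Zᶜ : Set V) G).Adj ⟨v, hv⟩ ⟨w, hw⟩ := by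
          simp only [SimpleGraph.comap_adj, Function.Embedding.coe_subtype]
          exact hadj
        exact ((gen_comm hadj').map ψ'.toMonoidHom).map i
    set mkφ : MulAut (RAAG (SimpleGraph.induce (Zᶜ : Set V) G)) → (RAAG G →* RAAG G) :=
      fun ψ' => toGrp G _ (hmkφ ψ') with hmkφdef
    have hmkφ_gen_Z : ∀ ψ' v, v ∈ Z → mkφ ψ' (gen G v) = gen G v := by
      intro ψ' v hv
      rw [hmkφdef]
      simp only [toGrp_gen]
      rw [dif_pos hv]
    have hmkφ_gen_nZ : ∀ ψ' v (hv : v ∉ Z),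
        mkφ ψ' (gen G v) = i (ψ' (gen _ (⟨v, hv⟩ : (Zᶜ : Set V)))) := by
      intro ψ' v hv
      rw [hmkφdef]
      simp only [toGrp_gen]
      rw [dif_neg hv]
    have hφι : ∀ ψ', (mkφ ψ').comp i = i.comp ψ'.toMonoidHom := by
      intro ψ'
      apply raag_hom_ext
      rintro ⟨u, hu⟩
      rw [MonoidHom.comp_apply, MonoidHom.comp_apply, hi_gen u hu,
        hmkφ_gen_nZ ψ' u hu]
      rfl
    have hφφ : ∀ ψ₁ ψ₂ : MulAut (RAAG (SimpleGraph.induce (Zᶜ : Set V) G)),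
        ∀ x, mkφ ψ₁ (mkφ ψ₂ x) = mkφ (ψ₁ * ψ₂) x := by
      intro ψ₁ ψ₂
      have : (mkφ ψ₁).comp (mkφ ψ₂) = mkφ (ψ₁ * ψ₂) := by
        apply raag_hom_ext
        intro v
        by_cases hv : v ∈ Z
        · rw [MonoidHom.comp_apply, hmkφ_gen_Z ψ₂ v hv, hmkφ_gen_Z ψ₁ v hv,
            hmkφ_gen_Z (ψ₁ * ψ₂) v hv]
        · rw [MonoidHom.comp_apply, hmkφ_gen_nZ ψ₂ v hv, hmkφ_gen_nZ (ψ₁ * ψ₂) v hv]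
          have := congrFun (congrArg DFunLike.coe (hφι ψ₁)) (ψ₂ (gen _ (⟨v, hv⟩ : (Zᶜ : Set V))))
          simp only [MonoidHom.comp_apply, MulEquiv.coe_toMonoidHom] at this
          rw [this]
          rfl
      intro x
      exact congrFun (congrArg DFunLike.coe this) x
    have hmkφ_id : ∀ x, mkφ 1 x = x := by
      intro x
      have : mkφ 1 = MonoidHom.id _ := by
        apply raag_hom_ext
        intro v
        by_cases hv : v ∈ Z
        · rw [MonoidHom.id_apply, hmkφ_gen_Z 1 v hv]
        · rw [MonoidHom.id_apply, hmkφ_gen_nZ 1 v hv]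
          show i (gen _ _) = _
          rw [hi_gen v hv]
      rw [this, MonoidHom.id_apply]
    refine ⟨{ toFun := mkφ ψ
              invFun := mkφ ψ⁻¹
              left_inv := ?_
              right_inv := ?_
              map_mul' := map_mul _ }, ?_, ?_⟩
    · intro x
      rw [hφφ ψ⁻¹ ψ x, inv_mul_cancel, hmkφ_id x]
    · intro x
      rw [hφφ ψ ψ⁻¹ x, mul_inv_cancel, hmkφ_id x]
    · -- intertwining
      intro g
      show q (mkφ ψ g) = ψ (q g)
      have : q.comp (mkφ ψ) = ψ.toMonoidHom.comp q := by
        apply raag_hom_ext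
        intro v
        by_cases hv : v ∈ Z
        · rw [MonoidHom.comp_apply, MonoidHom.comp_apply, hmkφ_gen_Z ψ v hv,
            hq_Z v hv, MulEquiv.coe_toMonoidHom, map_one]
        · rw [MonoidHom.comp_apply, MonoidHom.comp_apply, hmkφ_gen_nZ ψ v hv,
            hq_mem v hv, hqi, MulEquiv.coe_toMonoidHom]
      exact congrFun (congrArg DFunLike.coe this) g
    · -- fixes Z pointwise
      intro v hv
      exact hmkφ_gen_Z ψ v hv

end Main


/-- For `Γ` with nontrivial proper center `Z` and `Δ = Γ - Z`:
the quotient of `A_Γ` by the normal closure of `A_Z` is `A_Δ`, every automorphism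
of `A_Γ` descends to `A_Δ`, the induced map on outer automorphism groups is well
defined, and it is surjective with a splitting extending automorphisms of `A_Δ`
by the identity on `Z`. -/
theorem projection_surjective_split [Fintype V] (G : SimpleGraph V)
    (Z : Set V) (hZdef : Z = {v : V | ∀ w, w ≠ v → G.Adj v w})
    (hne : Z.Nonempty) (hproper : Z ≠ Set.univ) :
    ∃ q : RAAG G →* RAAG (SimpleGraph.induce (Zᶜ : Set V) G),
      (∀ (v : V) (hv : v ∈ (Zᶜ : Set V)),
          q (gen G v) = gen (SimpleGraph.induce (Zᶜ : Set V) G) ⟨v, hv⟩) ∧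
      (∀ v ∈ Z, q (gen G v) = 1) ∧
      Function.Surjective q ∧
      q.ker = Subgroup.normalClosure (gen G '' Z) ∧
      (∀ φ : MulAut (RAAG G),
          ∃ ψ : MulAut (RAAG (SimpleGraph.induce (Zᶜ : Set V) G)),
            ∀ g, q (φ g) = ψ (q g)) ∧
      (∀ (φ : MulAut (RAAG G))
          (ψ : MulAut (RAAG (SimpleGraph.induce (Zᶜ : Set V) G))),
          (∀ g, q (φ g) = ψ (q g)) →
          (∃ a, ∀ g, φ g = a * g * a⁻¹) → ∃ b, ∀ h, ψ h = b * h * b⁻¹) ∧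
      (∀ ψ : MulAut (RAAG (SimpleGraph.induce (Zᶜ : Set V) G)),
          ∃ φ : MulAut (RAAG G),
            (∀ g, q (φ g) = ψ (q g)) ∧ ∀ v ∈ Z, φ (gen G v) = gen G v) :=
  projection_surjective_split_aux G Z hZdef

end RAAGPaper
end
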